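/- Let p be a probability distribution in non-increasing order with ∑ p_i^α < ∞ for fixed α ∈ (1,∞), and let p^{(m)} be defined by p^{(m)}_i = p_i for i ≤ m, p^{(m)}_{m+1} = ∑_{i>m} p_i, and 0 otherwise. Then R_α(p) − R_α(p^{(m)}) = (α−1)^{-1} ln( 1 + ( (∑_{i>m} p_i)^α − ∑_{i>m} p_i^α ) / ∑_{i≥1} p_i^α ), and this quantity is ≤ (α−1)^{-1} ( (∑_{i>m} p_i)^α − ∑_{i>m} p_i^α ) / ∑_{i≥1} p_i^α. -/

import Mathlib

open scoped BigOperators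

/-- Sum of the `k` largest entries of a nonnegative summable sequence,
defined as the supremum of sums over `k`-element index sets. -/
noncomputable def topSum (p : ℕ → ℝ) (k : ℕ) : ℝ :=
  sSup {s : ℝ | ∃ t : Finset ℕ, t.card = k ∧ s = ∑ i ∈ t, p i}

/-- `p` is a probability distribution on ℕ. -/
def IsDistrib (p : ℕ → ℝ) : Prop :=
  (∀ i, 0 ≤ p i) ∧ Summable p ∧ ∑' i, p i = 1

/-- `p` m-partially majorizes `q`. -/
def PMaj (m : ℕ) (p q : ℕ → ℝ) : Prop :=
  ∀ k ≤ m, topSum q k ≤ topSum p k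

/-- `p` majorizes `q`. -/
def Maj (p q : ℕ → ℝ) : Prop :=
  ∀ k, topSum q k ≤ topSum p k

theorem renyi_truncation_formula (α : ℝ) (hα : 1 < α)
    (p : ℕ → ℝ) (hmono : Antitone p) (hp : IsDistrib p)
    (hps : Summable fun i => p i ^ α) (m : ℕ)
    (pm : ℕ → ℝ)
    (hpmdef : pm = fun i => if i < m then p i
      else if i = m then ∑' j : ℕ, p (j + m) else 0) :
    (1 - α)⁻¹ * Real.log (∑' i, p i ^ α)
        - (1 - α)⁻¹ * Real.log (∑' i, pm i ^ α)
      = (α - 1)⁻¹ * Real.log (1 +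
          ((∑' j : ℕ, p (j + m)) ^ α - ∑' j : ℕ, p (j + m) ^ α)
            / ∑' i, p i ^ α) ∧
    (1 - α)⁻¹ * Real.log (∑' i, p i ^ α)
        - (1 - α)⁻¹ * Real.log (∑' i, pm i ^ α)
      ≤ (α - 1)⁻¹ * (((∑' j : ℕ, p (j + m)) ^ α - ∑' j : ℕ, p (j + m) ^ α)
            / ∑' i, p i ^ α) := by
  have hαne : α ≠ 0 := by linarith
  have hp0 : ∀ i, 0 ≤ p i := hp.1
  have hpsum : Summable p := hp.2.1
  have hp1 : ∑' i, p i = 1 := hp.2.2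
  have hp0pos : 0 < p 0 := by
    rcases (hp0 0).lt_or_eq with h | h
    · exact h
    · exfalso
      have hz : ∀ i, p i = 0 := fun i =>
        le_antisymm (by simpa [← h] using hmono (Nat.zero_le i)) (hp0 i)
      rw [show p = fun _ => (0:ℝ) from funext hz] at hp1
      simp at hp1
  set S : ℝ := ∑' i, p i ^ α with hSdef
  set T : ℝ := ∑' j : ℕ, p (j + m) with hTdef
  set Tα : ℝ := ∑' j : ℕ, p (j + m) ^ α with hTαdef
  have htail : Summable fun j => p (j + m) := (summable_nat_add_iff m).mpr hpsum
  have htailα : Summable fun j => p (j + m) ^ α := (summable_nat_add_iff m).mpr hps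
  have hT0 : 0 ≤ T := tsum_nonneg fun j => hp0 _
  have hSpos : 0 < S := by
    have h0 : 0 < p 0 ^ α := Real.rpow_pos_of_pos hp0pos α
    have hle : p 0 ^ α ≤ S := Summable.le_tsum hps 0 fun j _ => Real.rpow_nonneg (hp0 j) α
    linarith
  have hle : ∀ j, p (j + m) ≤ T := fun j => Summable.le_tsum htail j fun k _ => hp0 _
  have hbound : ∀ j, p (j + m) ^ α ≤ p (j + m) * T ^ (α - 1) := by
    intro j
    rcases (hp0 (j + m)).eq_or_lt with h | h
    · rw [← h, Real.zero_rpow hαne, zero_mul]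
    · have e : (1:ℝ) + (α - 1) = α := by ring
      calc p (j + m) ^ α = p (j + m) ^ ((1:ℝ) + (α - 1)) := by rw [e]
        _ = p (j + m) ^ (1:ℝ) * p (j + m) ^ (α - 1) := Real.rpow_add h 1 (α - 1)
        _ = p (j + m) * p (j + m) ^ (α - 1) := by rw [Real.rpow_one]
        _ ≤ p (j + m) * T ^ (α - 1) :=
            mul_le_mul_of_nonneg_left
              (Real.rpow_le_rpow h.le (hle j) (by linarith)) (hp0 _)
  have hTα_le : Tα ≤ T ^ α := by
    have hsum2 : Summable fun j => p (j + m) * T ^ (α - 1) := htail.mul_right _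
    calc Tα ≤ ∑' j, p (j + m) * T ^ (α - 1) := Summable.tsum_le_tsum hbound htailα hsum2
      _ = T * T ^ (α - 1) := by rw [tsum_mul_right]
      _ = T ^ α := by
          rcases hT0.eq_or_lt with h | h
          · rw [← h, Real.zero_rpow hαne, zero_mul]
          · have e : (1:ℝ) + (α - 1) = α := by ring
            have h2 := Real.rpow_add h 1 (α - 1)
            rw [Real.rpow_one] at h2
            rw [← h2, e]
  have hTα0 : 0 ≤ Tα := tsum_nonneg fun j => Real.rpow_nonneg (hp0 _) α
  -- compute the truncated sum
  have hpm_zero : ∀ i ∉ Finset.range (m + 1), pm i ^ α = 0 := by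
    intro i hi
    simp only [Finset.mem_range, not_lt] at hi
    rw [hpmdef]
    simp only
    rw [if_neg (by omega), if_neg (by omega), Real.zero_rpow hαne]
  have hsplit : ∑ i ∈ Finset.range m, p i ^ α + Tα = S :=
    Summable.sum_add_tsum_nat_add m hps
  have hPmval : (∑' i, pm i ^ α) = S + (T ^ α - Tα) := by
    rw [tsum_eq_sum hpm_zero, Finset.sum_range_succ]
    have h1 : pm m ^ α = T ^ α := by
      rw [hpmdef]; simp
    have h2 : ∀ i ∈ Finset.range m, pm i ^ α = p i ^ α := by
      intro i hi
      rw [hpmdef]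
      simp only
      rw [if_pos (Finset.mem_range.mp hi)]
    rw [h1, Finset.sum_congr rfl h2]
    linarith
  set x : ℝ := (T ^ α - Tα) / S with hxdef
  have hx0 : 0 ≤ x := div_nonneg (by linarith) hSpos.le
  have h1x : (0:ℝ) < 1 + x := by linarith
  have hfact : S + (T ^ α - Tα) = S * (1 + x) := by
    rw [hxdef, mul_add, mul_one, mul_div_assoc', mul_div_right_comm, div_self hSpos.ne', one_mul]
  have hlogPm : Real.log (∑' i, pm i ^ α) = Real.log S + Real.log (1 + x) := by
    rw [hPmval, hfact, Real.log_mul hSpos.ne' h1x.ne']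
  have hinv : (1 - α)⁻¹ = -(α - 1)⁻¹ := by
    rw [show (1 - α) = -(α - 1) by ring, inv_neg]
  constructor
  · rw [hlogPm, hinv]; ring
  · rw [hlogPm, hinv]
    have hlog : Real.log (1 + x) ≤ x := by
      have := Real.log_le_sub_one_of_pos h1x
      linarith
    have hc : 0 ≤ (α - 1)⁻¹ := inv_nonneg.mpr (by linarith)
    nlinarith [mul_le_mul_of_nonneg_left hlog hc]
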